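/- Let β ∈ (1,2) be a Pisot number (an algebraic integer all of whose Galois conjugates have absolute value < 1), and let α ∈ ℚ(β) ∩ (0,2-β). Then every x ∈ ℚ(β) ∩ J_{β,α} is eventually periodic under T⁺_{β,α}: the orbit {(T⁺_{β,α})^n(x) : n ∈ ℕ} is a finite set. -/

import Mathlib

noncomputable def Tplus (β α : ℝ) (x : ℝ) : ℝ :=
  if x < (1 - α) / β then β * x + α else β * x + α - 1

lemma exists_nat_smul_mem_adjoin_int {K : Type*} [CommRing K] [Algebra ℚ K] (b : K)
    {y : K} (hy : y ∈ Algebra.adjoin ℚ ({b} : Set K)) :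
    ∃ q : ℕ, 0 < q ∧ (q : ℤ) • y ∈ Algebra.adjoin ℤ ({b} : Set K) := by
  induction hy using Algebra.adjoin_induction with
  | mem z hz =>
    exact ⟨1, one_pos, by simpa using Algebra.subset_adjoin hz⟩
  | algebraMap r =>
    refine ⟨r.den, r.pos, ?_⟩
    have h2 : (r.den : ℤ) • algebraMap ℚ K r = algebraMap ℤ K r.num := by
      rw [← map_zsmul (algebraMap ℚ K), IsScalarTower.algebraMap_eq ℤ ℚ K,
        RingHom.comp_apply]
      congr 1
      rw [zsmul_eq_mul]
      push_cast
      rw [mul_comm, Rat.mul_den_eq_num, eq_intCast (algebraMap ℤ ℚ)]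
    rw [h2]
    exact Subalgebra.algebraMap_mem _ _
  | add u v hu hv ihu ihv =>
    obtain ⟨p, hp0, hp⟩ := ihu
    obtain ⟨s, hs0, hs⟩ := ihv
    refine ⟨p * s, Nat.mul_pos hp0 hs0, ?_⟩
    have : ((p * s : ℕ) : ℤ) • (u + v) = (s : ℤ) • ((p : ℤ) • u) + (p : ℤ) • ((s : ℤ) • v) := by
      push_cast
      rw [smul_add, smul_smul, smul_smul]
      ring_nf
    rw [this]
    exact add_mem (zsmul_mem hp _) (zsmul_mem hs _)
  | mul u v hu hv ihu ihv =>
    obtain ⟨p, hp0, hp⟩ := ihu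
    obtain ⟨s, hs0, hs⟩ := ihv
    refine ⟨p * s, Nat.mul_pos hp0 hs0, ?_⟩
    have : ((p * s : ℕ) : ℤ) • (u * v) = ((p : ℤ) • u) * ((s : ℤ) • v) := by
      push_cast
      rw [smul_mul_smul_comm]
    rw [this]
    exact mul_mem hp hs

set_option maxHeartbeats 1000000 in
open IntermediateField Polynomial in
/-- If `β ∈ (1,2)` is a Pisot number and `α ∈ ℚ(β) ∩ (0, 2-β)`, then every
`x ∈ ℚ(β) ∩ J_{β,α}` has a finite orbit under `T⁺_{β,α}`. -/
theorem pisot_orbit_finite (β : ℝ) (hβ : β ∈ Set.Ioo (1 : ℝ) 2)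
    (hint : IsIntegral ℤ β)
    (hPisot : ∀ γ : ℂ, Polynomial.aeval γ (minpoly ℚ β) = 0 → γ ≠ (β : ℂ) →
      ‖γ‖ < 1)
    (α : ℝ) (hα : α ∈ Set.Ioo (0 : ℝ) (2 - β))
    (hαQ : α ∈ Algebra.adjoin ℚ ({β} : Set ℝ))
    (x : ℝ) (hxQ : x ∈ Algebra.adjoin ℚ ({β} : Set ℝ))
    (hxJ : x ∈ Set.Icc (-α / (β - 1)) ((1 - α) / (β - 1))) :
    (Set.range fun n : ℕ => (Tplus β α)^[n] x).Finite := by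
  obtain ⟨hβ1, hβ2⟩ := hβ
  obtain ⟨hα0, hα2⟩ := hα
  have hβ1' : (0 : ℝ) < β - 1 := by linarith
  have hβ0 : (0 : ℝ) < β := by linarith
  have hα1 : α < 1 := by linarith
  set l : ℝ := -α / (β - 1) with hl
  set rr : ℝ := (1 - α) / (β - 1) with hrr
  have hrr1 : (1 : ℝ) ≤ rr := by rw [hrr, le_div_iff₀ hβ1']; linarith
  have hl0 : l ≤ 0 := by
    rw [hl]
    apply div_nonpos_of_nonpos_of_nonneg <;> linarith
  have hlfix : β * l + α = l := by
    rw [hl]; field_simp; ring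
  have hrfix : β * rr + α - 1 = rr := by
    rw [hrr]; field_simp; ring
  have hT : ∀ z ∈ Set.Icc l rr, Tplus β α z ∈ Set.Icc l rr := by
    rintro z ⟨hz1, hz2⟩
    unfold Tplus
    split_ifs with h
    · constructor
      · nlinarith [mul_nonneg hβ0.le (sub_nonneg.2 hz1)]
      · have h1 : β * z + α < 1 := by
          have := (lt_div_iff₀ hβ0).mp h
          linarith
        linarith
    · push_neg at h
      constructor
      · have : 1 - α ≤ β * z := by
          have := (div_le_iff₀ hβ0).mp h
          linarith
        linarith
      · nlinarith [mul_nonneg hβ0.le (sub_nonneg.2 hz2)]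
  -- the number field ℚ(β)
  have hβQ : IsIntegral ℚ β := hint.tower_top
  haveI hFD : FiniteDimensional ℚ ℚ⟮β⟯ := adjoin.finiteDimensional hβQ
  haveI : NumberField ℚ⟮β⟯ := ⟨⟩
  set b : ℚ⟮β⟯ := AdjoinSimple.gen ℚ β with hbdef
  have hxK : x ∈ ℚ⟮β⟯ := algebra_adjoin_le_adjoin ℚ {β} hxQ
  have haK : α ∈ ℚ⟮β⟯ := algebra_adjoin_le_adjoin ℚ {β} hαQ
  set x0 : ℚ⟮β⟯ := ⟨x, hxK⟩ with hx0def
  set a : ℚ⟮β⟯ := ⟨α, haK⟩ with hadef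
  have hmemQ : ∀ y : ℚ⟮β⟯, y ∈ Algebra.adjoin ℚ ({b} : Set ℚ⟮β⟯) := by
    intro y
    have hts : (ℚ⟮β⟯).toSubalgebra = Algebra.adjoin ℚ ({β} : Set ℝ) :=
      adjoin_simple_toSubalgebra_of_isAlgebraic hβQ.isAlgebraic
    have h1 : (y : ℝ) ∈ Algebra.adjoin ℚ ({β} : Set ℝ) := by rw [← hts]; exact y.2
    have h2 : (Algebra.adjoin ℚ ({b} : Set ℚ⟮β⟯)).map (ℚ⟮β⟯).val
        = Algebra.adjoin ℚ ({β} : Set ℝ) := by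
      erw [AlgHom.map_adjoin]
      congr 1
      rw [Set.image_singleton]
      rfl
    rw [← h2] at h1
    obtain ⟨z, hz, hzy⟩ := h1
    have : z = y := Subtype.ext hzy
    rwa [← this]
  set f : ℚ⟮β⟯ → ℚ⟮β⟯ :=
    fun z => if (z : ℝ) < (1 - α) / β then b * z + a else b * z + a - 1 with hfdef
  have hfapp : ∀ z : ℚ⟮β⟯,
      f z = if (z : ℝ) < (1 - α) / β then b * z + a else b * z + a - 1 := by
    intro z
    rw [hfdef]
  have hbval : ((b : ℚ⟮β⟯) : ℝ) = β := rfl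
  have haval : ((a : ℚ⟮β⟯) : ℝ) = α := rfl
  have hfval : ∀ z : ℚ⟮β⟯, ((f z : ℚ⟮β⟯) : ℝ) = Tplus β α (z : ℝ) := by
    intro z
    rw [hfapp z, Tplus]
    by_cases h : (z : ℝ) < (1 - α) / β
    · rw [if_pos h, if_pos h]
      push_cast
      rfl
    · rw [if_neg h, if_neg h]
      push_cast
      rfl
  have horb : ∀ n : ℕ, (Tplus β α)^[n] x = ((f^[n] x0 : ℚ⟮β⟯) : ℝ) := by
    intro n
    induction n with
    | zero => simp [hx0def]
    | succ n ih =>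
      rw [Function.iterate_succ_apply', Function.iterate_succ_apply', ih, hfval]
  have hIcc : ∀ n : ℕ, ((f^[n] x0 : ℚ⟮β⟯) : ℝ) ∈ Set.Icc l rr := by
    intro n
    induction n with
    | zero => simpa [hx0def] using hxJ
    | succ n ih =>
      rw [Function.iterate_succ_apply', hfval]
      exact hT _ ih
  -- denominators
  obtain ⟨qa, hqa0, hqa⟩ := exists_nat_smul_mem_adjoin_int b (hmemQ a)
  obtain ⟨qx, hqx0, hqx⟩ := exists_nat_smul_mem_adjoin_int b (hmemQ x0)
  set q : ℕ := qa * qx with hqdef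
  have hq0 : 0 < q := Nat.mul_pos hqa0 hqx0
  have hqa' : (q : ℤ) • a ∈ Algebra.adjoin ℤ ({b} : Set ℚ⟮β⟯) := by
    have hsm : ((q : ℕ) : ℤ) • a = (qx : ℤ) • ((qa : ℤ) • a) := by
      rw [smul_smul, hqdef]
      push_cast
      rw [mul_comm]
    rw [hsm]
    exact zsmul_mem hqa _
  have hqx' : (q : ℤ) • x0 ∈ Algebra.adjoin ℤ ({b} : Set ℚ⟮β⟯) := by
    have hsm : ((q : ℕ) : ℤ) • x0 = (qa : ℤ) • ((qx : ℤ) • x0) := by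
      rw [smul_smul, hqdef]
      push_cast
      rfl
    rw [hsm]
    exact zsmul_mem hqx _
  have hbmem : b ∈ Algebra.adjoin ℤ ({b} : Set ℚ⟮β⟯) := Algebra.subset_adjoin rfl
  have hcl : ∀ n : ℕ, (q : ℤ) • f^[n] x0 ∈ Algebra.adjoin ℤ ({b} : Set ℚ⟮β⟯) := by
    intro n
    induction n with
    | zero => exact hqx'
    | succ n ih =>
      rw [Function.iterate_succ_apply', hfapp]
      have h1 : ((q : ℤ) • (1 : ℚ⟮β⟯)) = ((q : ℤ) : ℚ⟮β⟯) := by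
        rw [zsmul_eq_mul, mul_one]
      by_cases h : ((f^[n] x0 : ℚ⟮β⟯) : ℝ) < (1 - α) / β
      · rw [if_pos h]
        have : (q : ℤ) • (b * f^[n] x0 + a) = b * ((q : ℤ) • f^[n] x0) + (q : ℤ) • a := by
          rw [smul_add, mul_smul_comm]
        rw [this]
        exact add_mem (mul_mem hbmem ih) hqa'
      · rw [if_neg h]
        have : (q : ℤ) • (b * f^[n] x0 + a - 1)
            = b * ((q : ℤ) • f^[n] x0) + (q : ℤ) • a - ((q : ℤ) : ℚ⟮β⟯) := by
          rw [smul_sub, smul_add, mul_smul_comm, h1]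
        rw [this]
        exact sub_mem (add_mem (mul_mem hbmem ih) hqa') (intCast_mem _ _)
  -- integrality
  have hbint : IsIntegral ℤ b := by
    rw [← isIntegral_algebraMap_iff (R := ℤ) (algebraMap ℚ⟮β⟯ ℝ).injective]
    exact hint
  have hint' : ∀ y ∈ Algebra.adjoin ℤ ({b} : Set ℚ⟮β⟯), IsIntegral ℤ y := by
    intro y hy
    have hle : Algebra.adjoin ℤ ({b} : Set ℚ⟮β⟯) ≤ integralClosure ℤ ℚ⟮β⟯ := by
      apply Algebra.adjoin_le
      rintro w hw
      rw [Set.mem_singleton_iff] at hw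
      subst hw
      exact hbint
    exact hle hy
  -- minimal polynomial
  have hminpoly : minpoly ℚ β = minpoly ℚ b :=
    minpoly.algebraMap_eq (algebraMap ℚ⟮β⟯ ℝ).injective b
  -- embedding dichotomy
  have hdich : ∀ φ : ℚ⟮β⟯ →+* ℂ, ‖φ b‖ < 1 ∨ ∀ z : ℚ⟮β⟯, φ z = ((z : ℝ) : ℂ) := by
    intro φ
    have hroot : Polynomial.aeval (φ b) (minpoly ℚ β) = 0 := by
      rw [hminpoly]
      have : φ b = φ.toRatAlgHom b := rfl
      rw [this, Polynomial.aeval_algHom_apply φ.toRatAlgHom b, minpoly.aeval, map_zero]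
    by_cases hγ : φ b = (β : ℂ)
    · right
      intro z
      have key : ∀ w ∈ Algebra.adjoin ℚ ({b} : Set ℚ⟮β⟯), φ w = ((w : ℝ) : ℂ) := by
        intro w hw
        induction hw using Algebra.adjoin_induction with
        | mem w hw =>
          rw [Set.mem_singleton_iff] at hw
          subst hw
          exact hγ
        | algebraMap r =>
          have h1 : algebraMap ℚ ℚ⟮β⟯ r = (r : ℚ⟮β⟯) := by
            rw [eq_ratCast (algebraMap ℚ ℚ⟮β⟯)]
          rw [h1]
          push_cast
          rw [map_ratCast]
        | add u v hu hv ihu ihv =>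
          push_cast
          rw [map_add, ihu, ihv]
        | mul u v hu hv ihu ihv =>
          push_cast
          rw [map_mul, ihu, ihv]
      exact key z (hmemQ z)
    · left
      have := hPisot (φ b) hroot hγ
      exact this
  -- the bound
  set M : (ℚ⟮β⟯ →+* ℂ) → ℝ := fun φ =>
    max (max ‖φ ((q : ℤ) • x0)‖ ((‖φ ((q : ℤ) • a)‖ + q) / (1 - ‖φ b‖)))
      ((q : ℝ) * (|l| + |rr|)) with hMdef
  have hMbound : ∀ (φ : ℚ⟮β⟯ →+* ℂ) (n : ℕ), ‖φ ((q : ℤ) • f^[n] x0)‖ ≤ M φ := by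
    intro φ
    rcases hdich φ with hlt | hι
    · intro n
      induction n with
      | zero => exact le_max_of_le_left (le_max_left _ _)
      | succ n ih =>
        rw [Function.iterate_succ_apply']
        have hb0 : (0 : ℝ) ≤ ‖φ b‖ := norm_nonneg _
        have key : ‖φ ((q : ℤ) • f (f^[n] x0))‖
            ≤ ‖φ b‖ * ‖φ ((q : ℤ) • f^[n] x0)‖ + (‖φ ((q : ℤ) • a)‖ + q) := by
          rw [hfapp (f^[n] x0)]
          split_ifs with h
          · have heq : (q : ℤ) • (b * f^[n] x0 + a)
                = b * ((q : ℤ) • f^[n] x0) + (q : ℤ) • a := by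
              rw [smul_add, mul_smul_comm]
            rw [heq, map_add, map_mul]
            have h1 := norm_add_le (φ b * φ ((q : ℤ) • f^[n] x0)) (φ ((q : ℤ) • a))
            rw [norm_mul] at h1
            have : (0:ℝ) ≤ (q : ℝ) := by positivity
            linarith
          · have h1 : ((q : ℤ) • (1 : ℚ⟮β⟯)) = ((q : ℤ) : ℚ⟮β⟯) := by
              rw [zsmul_eq_mul, mul_one]
            have heq : (q : ℤ) • (b * f^[n] x0 + a - 1)
                = b * ((q : ℤ) • f^[n] x0) + (q : ℤ) • a - ((q : ℤ) : ℚ⟮β⟯) := by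
              rw [smul_sub, smul_add, mul_smul_comm, h1]

            rw [heq, map_sub, map_add, map_mul]
            have h1 := norm_sub_le (φ b * φ ((q : ℤ) • f^[n] x0) + φ ((q : ℤ) • a))
              (φ ((q : ℤ) : ℚ⟮β⟯))
            have h2 := norm_add_le (φ b * φ ((q : ℤ) • f^[n] x0)) (φ ((q : ℤ) • a))
            rw [norm_mul] at h2
            have h3 : ‖φ ((q : ℤ) : ℚ⟮β⟯)‖ = (q : ℝ) := by
              rw [map_intCast]
              simp
            linarith
        have hD : (‖φ ((q : ℤ) • a)‖ + q) / (1 - ‖φ b‖) ≤ M φ :=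
          le_max_of_le_left (le_max_right _ _)
        have h1r : (0 : ℝ) < 1 - ‖φ b‖ := by linarith
        have hD' := (div_le_iff₀ h1r).mp hD
        nlinarith [mul_nonneg hb0 (sub_nonneg.2 ih), norm_nonneg (φ ((q : ℤ) • f^[n] x0))]
    · intro n
      have hv := hIcc n
      have hcast : (((q : ℤ) • f^[n] x0 : ℚ⟮β⟯) : ℝ)
          = (q : ℝ) * ((f^[n] x0 : ℚ⟮β⟯) : ℝ) := by
        rw [zsmul_eq_mul]
        push_cast
        ring
      rw [hι, Complex.norm_real, Real.norm_eq_abs, hcast, abs_mul, Nat.abs_cast]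
      have habs : |((f^[n] x0 : ℚ⟮β⟯) : ℝ)| ≤ |l| + |rr| := by
        obtain ⟨h1, h2⟩ := hv
        rw [abs_le]
        constructor
        · have := neg_abs_le l
          have := abs_nonneg rr
          linarith
        · have := le_abs_self rr
          have := abs_nonneg l
          linarith
      have : (q : ℝ) * |((f^[n] x0 : ℚ⟮β⟯) : ℝ)| ≤ (q : ℝ) * (|l| + |rr|) :=
        mul_le_mul_of_nonneg_left habs (by positivity)
      exact le_trans this (le_max_right _ _)
  obtain ⟨B, hB⟩ := Finite.exists_le M
  have hrange : (Set.range fun n : ℕ => (q : ℤ) • f^[n] x0).Finite := by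
    apply (NumberField.Embeddings.finite_of_norm_le ℚ⟮β⟯ ℂ B).subset
    rintro _ ⟨n, rfl⟩
    exact ⟨hint' _ (hcl n), fun φ => (hMbound φ n).trans (hB φ)⟩
  have hrange2 : (Set.range fun n : ℕ => f^[n] x0).Finite := by
    have hinj : Function.Injective (fun z : ℚ⟮β⟯ => (q : ℤ) • z) :=
      smul_right_injective _ (by exact_mod_cast hq0.ne')
    apply Set.Finite.of_finite_image ?_ hinj.injOn
    rwa [← Set.range_comp]
  have hfin : (Set.range fun n : ℕ => (Tplus β α)^[n] x)
      = (fun z : ℚ⟮β⟯ => (z : ℝ)) '' (Set.range fun n : ℕ => f^[n] x0) := by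
    rw [← Set.range_comp]
    ext w
    simp only [Set.mem_range, Function.comp]
    constructor
    · rintro ⟨n, rfl⟩
      exact ⟨n, (horb n).symm⟩
    · rintro ⟨n, rfl⟩
      exact ⟨n, horb n⟩
  rw [hfin]
  exact hrange2.image _
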